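/- Let u, w : ℝ² → ℝ be smooth functions of (x, t) satisfying the KdV6 system u_t = u_xxx + 6uu_x − w_x and w_xxx + 4u w_x + 2u_x w = 0. Then ∂_t(u²/2) = ∂_x( u u_xx − u_x²/2 + 2u³ + u w + w_xx/2 ). (That is, u²/2, the first Hamiltonian density of KdV, remains a conserved density for the KdV6 equation, the Kupershmidt deformation of KdV.) -/

import Mathlib

/-- Partial derivative in the first variable (x) of a function of `(x, t)`. -/
noncomputable def pdx (f : ℝ × ℝ → ℝ) : ℝ × ℝ → ℝ :=
  fun p => fderiv ℝ f p (1, 0)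

/-- Partial derivative in the second variable (t) of a function of `(x, t)`. -/
noncomputable def pdt (f : ℝ × ℝ → ℝ) : ℝ × ℝ → ℝ :=
  fun p => fderiv ℝ f p (0, 1)


lemma contDiff_pdx {f : ℝ × ℝ → ℝ} (hf : ContDiff ℝ (⊤ : ℕ∞) f) :
    ContDiff ℝ (⊤ : ℕ∞) (pdx f) :=
  (hf.fderiv_right (m := (⊤:ℕ∞)) (by exact_mod_cast le_top)).clm_apply contDiff_const

lemma fd_add {f g : ℝ × ℝ → ℝ} {p v : ℝ × ℝ}
    (hf : DifferentiableAt ℝ f p) (hg : DifferentiableAt ℝ g p) :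
    fderiv ℝ (fun q => f q + g q) p v = fderiv ℝ f p v + fderiv ℝ g p v := by
  rw [fderiv_fun_add hf hg]; rfl

lemma fd_sub {f g : ℝ × ℝ → ℝ} {p v : ℝ × ℝ}
    (hf : DifferentiableAt ℝ f p) (hg : DifferentiableAt ℝ g p) :
    fderiv ℝ (fun q => f q - g q) p v = fderiv ℝ f p v - fderiv ℝ g p v := by
  rw [fderiv_fun_sub hf hg]; rfl

lemma fd_mul {f g : ℝ × ℝ → ℝ} {p v : ℝ × ℝ}
    (hf : DifferentiableAt ℝ f p) (hg : DifferentiableAt ℝ g p) :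
    fderiv ℝ (fun q => f q * g q) p v
      = fderiv ℝ f p v * g p + f p * fderiv ℝ g p v := by
  rw [fderiv_fun_mul hf hg]
  simp [mul_comm]
  ring

lemma fd_div_const {f : ℝ × ℝ → ℝ} {p v : ℝ × ℝ} (c : ℝ)
    (hf : DifferentiableAt ℝ f p) :
    fderiv ℝ (fun q => f q / c) p v = fderiv ℝ f p v / c := by
  simp only [div_eq_mul_inv]
  rw [fderiv_mul_const hf]
  simp [mul_comm]

lemma fd_const_mul {f : ℝ × ℝ → ℝ} {p v : ℝ × ℝ} (c : ℝ)
    (hf : DifferentiableAt ℝ f p) :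
    fderiv ℝ (fun q => c * f q) p v = c * fderiv ℝ f p v := by
  rw [fderiv_const_mul hf]; rfl

lemma fd_sq {f : ℝ × ℝ → ℝ} {p v : ℝ × ℝ}
    (hf : DifferentiableAt ℝ f p) :
    fderiv ℝ (fun q => f q ^ 2) p v = 2 * f p * fderiv ℝ f p v := by
  have : (fun q => f q ^ 2) = fun q => f q * f q := by funext q; ring
  rw [this, fd_mul hf hf]; ring

lemma fd_cube {f : ℝ × ℝ → ℝ} {p v : ℝ × ℝ}
    (hf : DifferentiableAt ℝ f p) :
    fderiv ℝ (fun q => f q ^ 3) p v = 3 * f p ^ 2 * fderiv ℝ f p v := by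
  have : (fun q => f q ^ 3) = fun q => f q * (f q * f q) := by funext q; ring
  rw [this, fd_mul (g := fun q => f q * f q) hf (hf.mul hf), fd_mul hf hf]; ring

/-- On solutions of the KdV6 system `u_t = u_xxx + 6uu_x − w_x`,
`w_xxx + 4u w_x + 2u_x w = 0` (the Kupershmidt deformation of KdV), the first
KdV Hamiltonian density `u²/2` remains a conserved density:
`∂_t(u²/2) = ∂_x(u u_xx − u_x²/2 + 2u³ + u w + w_xx/2)`. -/
theorem kdv6_conserved_density
    (u w : ℝ × ℝ → ℝ)
    (hu : ContDiff ℝ (⊤ : ℕ∞) u) (hw : ContDiff ℝ (⊤ : ℕ∞) w)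
    (heq1 : ∀ p : ℝ × ℝ,
      pdt u p = pdx (pdx (pdx u)) p + 6 * u p * pdx u p - pdx w p)
    (heq2 : ∀ p : ℝ × ℝ,
      pdx (pdx (pdx w)) p + 4 * u p * pdx w p + 2 * pdx u p * w p = 0) :
    ∀ p : ℝ × ℝ,
      pdt (fun q => (u q) ^ 2 / 2) p
        = pdx (fun q => u q * pdx (pdx u) q - (pdx u q) ^ 2 / 2
            + 2 * (u q) ^ 3 + u q * w q + pdx (pdx w) q / 2) p := by
  have hux := contDiff_pdx hu
  have huxx := contDiff_pdx hux
  have hwx := contDiff_pdx hw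
  have hwxx := contDiff_pdx hwx
  have du : ∀ {g : ℝ × ℝ → ℝ}, ContDiff ℝ (⊤ : ℕ∞) g →
      ∀ q, DifferentiableAt ℝ g q := fun hg q =>
    (hg.differentiable (by simp)) q
  intro p
  -- LHS
  have lhs : pdt (fun q => (u q) ^ 2 / 2) p = u p * pdt u p := by
    show fderiv ℝ (fun q => (u q) ^ 2 / 2) p (0,1) = _
    rw [fd_div_const (f := fun q => u q ^ 2) 2 ((du hu p).pow 2), fd_sq (du hu p)]
    show _ = u p * fderiv ℝ u p (0,1)
    ring
  -- RHS
  have d1 : DifferentiableAt ℝ (fun q => u q * pdx (pdx u) q) p :=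
    (du hu p).mul (du huxx p)
  have d2 : DifferentiableAt ℝ (fun q => (pdx u q) ^ 2 / 2) p :=
    by simpa [div_eq_mul_inv] using ((du hux p).pow 2).mul_const (2:ℝ)⁻¹
  have d3 : DifferentiableAt ℝ (fun q => 2 * (u q) ^ 3) p :=
    ((du hu p).pow 3).const_mul 2
  have d4 : DifferentiableAt ℝ (fun q => u q * w q) p :=
    (du hu p).mul (du hw p)
  have rhs : pdx (fun q => u q * pdx (pdx u) q - (pdx u q) ^ 2 / 2
            + 2 * (u q) ^ 3 + u q * w q + pdx (pdx w) q / 2) p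
      = pdx u p * pdx (pdx u) p + u p * pdx (pdx (pdx u)) p
        - pdx u p * pdx (pdx u) p + 6 * u p ^ 2 * pdx u p
        + (pdx u p * w p + u p * pdx w p) + pdx (pdx (pdx w)) p / 2 := by
    show fderiv ℝ _ p (1,0) = _
    rw [fd_add (f := fun q => u q * pdx (pdx u) q - pdx u q ^ 2 / 2 + 2 * u q ^ 3 + u q * w q) (g := fun q => pdx (pdx w) q / 2) (((d1.sub d2).add d3).add d4) (by simpa [div_eq_mul_inv] using (du hwxx p).mul_const (2:ℝ)⁻¹),
        fd_add (f := fun q => u q * pdx (pdx u) q - pdx u q ^ 2 / 2 + 2 * u q ^ 3) ((d1.sub d2).add d3) d4,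
        fd_add (f := fun q => u q * pdx (pdx u) q - pdx u q ^ 2 / 2) (d1.sub d2) d3,
        fd_sub d1 d2,
        fd_mul (du hu p) (du huxx p),
        fd_div_const (f := fun q => pdx u q ^ 2) 2 ((du hux p).pow 2), fd_sq (du hux p),
        fd_const_mul (f := fun q => u q ^ 3) 2 ((du hu p).pow 3), fd_cube (du hu p),
        fd_mul (du hu p) (du hw p),
        fd_div_const 2 (du hwxx p)]
    show fderiv ℝ u p (1,0) * pdx (pdx u) p + u p * fderiv ℝ (pdx (pdx u)) p (1,0)
        - 2 * pdx u p * fderiv ℝ (pdx u) p (1,0) / 2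
        + 2 * (3 * u p ^ 2 * fderiv ℝ u p (1,0))
        + (fderiv ℝ u p (1,0) * w p + u p * fderiv ℝ w p (1,0))
        + fderiv ℝ (pdx (pdx w)) p (1,0) / 2 = _
    show pdx u p * pdx (pdx u) p + u p * pdx (pdx (pdx u)) p
        - 2 * pdx u p * pdx (pdx u) p / 2
        + 2 * (3 * u p ^ 2 * pdx u p)
        + (pdx u p * w p + u p * pdx w p)
        + pdx (pdx (pdx w)) p / 2 = _
    ring
  rw [lhs, rhs, heq1 p]
  nlinarith [heq2 p]
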